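/- Conjugate gradient applied to f(x) = x^T A x/2 − b^T x with A symmetric positive definite having eigenvalues in [ℓ, L] satisfies f(x_k) − f(x*) ≤ C_0 (1 + √(ℓ/L))^{−(k−1)} for all k ≥ 1, where C_0 = (ℓ/2)‖x_0 − x*‖² + f(x_0) − f(x*). -/

import Mathlib

open scoped InnerProductSpace

section
variable {E : Type*} [NormedAddCommGroup E] [InnerProductSpace ℝ E]

lemma expand1 (A : E →L[ℝ] E) (hsymm : ∀ u v : E, ⟪A u, v⟫_ℝ = ⟪u, A v⟫_ℝ)
    (c : ℝ) (a : E) :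
    ⟪a - c • A a, A (a - c • A a)⟫_ℝ
      = ⟪A a, a⟫_ℝ - 2*c*‖A a‖^2 + c^2 * ⟪A (A a), A a⟫_ℝ := by
  rw [map_sub, map_smul]
  simp only [inner_sub_left, inner_sub_right, real_inner_smul_left, real_inner_smul_right]
  simp only [show ⟪a, A a⟫_ℝ = ⟪A a, a⟫_ℝ from real_inner_comm (A a) a,
      show ⟪a, A (A a)⟫_ℝ = ‖A a‖^2 by rw [← hsymm a (A a)]; exact real_inner_self_eq_norm_sq _,
      show ⟪A a, A a⟫_ℝ = ‖A a‖^2 from real_inner_self_eq_norm_sq _,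
      show ⟪A a, A (A a)⟫_ℝ = ⟪A (A a), A a⟫_ℝ from real_inner_comm _ _]
  ring

lemma expand2 (A : E →L[ℝ] E) (hsymm : ∀ u v : E, ⟪A u, v⟫_ℝ = ⟪u, A v⟫_ℝ)
    (c d : ℝ) (a u : E) :
    ‖a - c • u - d • A a‖^2
      = ‖a‖^2 + c^2*‖u‖^2 + d^2*‖A a‖^2 - 2*c*⟪a, u⟫_ℝ - 2*d*⟪A a, a⟫_ℝ
        + 2*c*d*⟪A a, u⟫_ℝ := by
  rw [← real_inner_self_eq_norm_sq]
  simp only [inner_sub_left, inner_sub_right, real_inner_smul_left, real_inner_smul_right]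
  simp only [show ⟪a, a⟫_ℝ = ‖a‖^2 from real_inner_self_eq_norm_sq _,
      show ⟪u, u⟫_ℝ = ‖u‖^2 from real_inner_self_eq_norm_sq _,
      show ⟪u, a⟫_ℝ = ⟪a, u⟫_ℝ from real_inner_comm _ _,
      show ⟪a, A a⟫_ℝ = ⟪A a, a⟫_ℝ from real_inner_comm _ _,
      show ⟪u, A a⟫_ℝ = ⟪A a, u⟫_ℝ from real_inner_comm _ _,
      show ⟪a, A u⟫_ℝ = ⟪A a, u⟫_ℝ from (hsymm a u).symm,
      show ⟪A a, A a⟫_ℝ = ‖A a‖^2 from real_inner_self_eq_norm_sq _]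
  ring

lemma expand3 (A : E →L[ℝ] E) (hsymm : ∀ u v : E, ⟪A u, v⟫_ℝ = ⟪u, A v⟫_ℝ)
    (a u : E) :
    ⟪a + u, A (a + u)⟫_ℝ = ⟪A a, a⟫_ℝ + 2*⟪A a, u⟫_ℝ + ⟪A u, u⟫_ℝ := by
  rw [map_add]
  simp only [inner_add_left, inner_add_right]
  simp only [show ⟪a, A a⟫_ℝ = ⟪A a, a⟫_ℝ from real_inner_comm _ _,
      show ⟪u, A u⟫_ℝ = ⟪A u, u⟫_ℝ from real_inner_comm _ _,
      show ⟪a, A u⟫_ℝ = ⟪A a, u⟫_ℝ from (hsymm a u).symm,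
      show ⟪u, A a⟫_ℝ = ⟪A a, u⟫_ℝ from real_inner_comm _ _]
  ring

lemma expand4 (c : ℝ) (a u : E) :
    ‖a - c • u‖^2 = ‖a‖^2 - 2*c*⟪a, u⟫_ℝ + c^2*‖u‖^2 := by
  rw [← real_inner_self_eq_norm_sq]
  simp only [inner_sub_left, inner_sub_right, real_inner_smul_left, real_inner_smul_right]
  simp only [show ⟪a, a⟫_ℝ = ‖a‖^2 from real_inner_self_eq_norm_sq _,
      show ⟪u, u⟫_ℝ = ‖u‖^2 from real_inner_self_eq_norm_sq _,
      show ⟪u, a⟫_ℝ = ⟪a, u⟫_ℝ from real_inner_comm _ _]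
  ring

end

lemma scalarStep (q L x1 x2 x3 y1 y2 y3 z1 w1 : ℝ)
    (hq0 : 0 < q) (hq1 : q ≤ 1) (hL : 0 < L) (hx2 : 0 ≤ x2)
    (h1 : w1 ≤ L * z1) (h2 : q^2*L * x2 ≤ y2) (h3 : q^2*L * x1 ≤ y1) :
    (y1 - 2*(1/L)*z1 + (1/L)^2*w1)/2
      + q^2*L/2 * (x1 + ((1-q)/q)^2*x2 + (q/(q^2*L))^2*z1 - 2*((1-q)/q)*x3
          - 2*(q/(q^2*L))*y1 + 2*((1-q)/q)*(q/(q^2*L))*y3)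
    ≤ (1-q) * ((y1 + 2*y3 + y2)/2 + q^2*L/2 * (x1 - 2*(1/q)*x3 + (1/q)^2*x2)) := by
  have hq : q ≠ 0 := ne_of_gt hq0
  have hL' : L ≠ 0 := ne_of_gt hL
  have key : (1-q) * ((y1 + 2*y3 + y2)/2 + q^2*L/2 * (x1 - 2*(1/q)*x3 + (1/q)^2*x2))
      - ((y1 - 2*(1/L)*z1 + (1/L)^2*w1)/2
      + q^2*L/2 * (x1 + ((1-q)/q)^2*x2 + (q/(q^2*L))^2*z1 - 2*((1-q)/q)*x3
          - 2*(q/(q^2*L))*y1 + 2*((1-q)/q)*(q/(q^2*L))*y3))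
      = (1/(2*L^2))*(L*z1 - w1) + ((1-q)/2)*(y2 - q^2*L*x2)
        + (q/2)*(y1 - q^2*L*x1) + (q^2*L*(1-q)/2)*(1 + 1/q)*x2 := by
    field_simp
    ring
  have t1 : 0 ≤ (1/(2*L^2))*(L*z1 - w1) := by
    apply mul_nonneg (by positivity) (by linarith)
  have t2 : 0 ≤ ((1-q)/2)*(y2 - q^2*L*x2) := by
    apply mul_nonneg (by linarith) (by linarith)
  have t3 : 0 ≤ (q/2)*(y1 - q^2*L*x1) := by
    apply mul_nonneg (by positivity) (by linarith)
  have t4 : 0 ≤ (q^2*L*(1-q)/2)*(1 + 1/q)*x2 := by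
    apply mul_nonneg (mul_nonneg (by apply div_nonneg _ (by norm_num); exact mul_nonneg (mul_nonneg (sq_nonneg q) hL.le) (by linarith)) (by positivity)) hx2
  linarith

lemma vecStep {E : Type*} [NormedAddCommGroup E] [InnerProductSpace ℝ E]
    (A : E →L[ℝ] E) (b xs : E) (hxs : A xs = b)
    (hsymm : ∀ u v : E, ⟪A u, v⟫_ℝ = ⟪u, A v⟫_ℝ)
    (ℓ L : ℝ) (hℓ : 0 < ℓ) (hℓL : ℓ ≤ L)
    (hlow : ∀ u : E, ℓ * ‖u‖ ^ 2 ≤ ⟪A u, u⟫_ℝ)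
    (hhigh : ∀ u : E, ⟪A u, u⟫_ℝ ≤ L * ‖u‖ ^ 2)
    (q : ℝ) (hq0 : 0 < q) (hq1 : q ≤ 1) (hq2 : q^2 * L = ℓ)
    (y v : E) :
    ⟪((1/(1+q)) • (y + q • v) - (1/L) • (A ((1/(1+q)) • (y + q • v)) - b)) - xs,
      A (((1/(1+q)) • (y + q • v) - (1/L) • (A ((1/(1+q)) • (y + q • v)) - b)) - xs)⟫_ℝ/2
      + ℓ/2 * ‖((1-q) • v + q • ((1/(1+q)) • (y + q • v))
          - (q/ℓ) • (A ((1/(1+q)) • (y + q • v)) - b)) - xs‖^2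
    ≤ (1-q) * (⟪y - xs, A (y - xs)⟫_ℝ/2 + ℓ/2 * ‖v - xs‖^2) := by
  have hL : 0 < L := lt_of_lt_of_le hℓ hℓL
  have hq : q ≠ 0 := ne_of_gt hq0
  have hℓ' : ℓ ≠ 0 := ne_of_gt hℓ
  have h1q : (1+q) ≠ 0 := by positivity
  set w : E := (1/(1+q)) • (y + q • v) with hw
  set a : E := w - xs with ha
  set u : E := y - w with hu
  have hg : A w - b = A a := by rw [ha, map_sub, hxs]
  have hyx : y - xs = a + u := by rw [ha, hu]; abel
  have hwv : (1+q) • w = y + q • v := by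
    rw [hw, smul_smul, mul_one_div, div_self h1q, one_smul]
  have hvx : v - xs = a - (1/q) • u := by
    have h2 : q • (v - xs) = q • a - u := by
      have hqv : q • v = (1+q) • w - y := by rw [hwv]; abel
      rw [smul_sub, hqv, ha, hu, add_smul, one_smul, smul_sub]
      abel
    have h3 := congrArg (fun z : E => (1/q) • z) h2
    simp only [smul_smul, smul_sub, one_div, inv_mul_cancel₀ hq, one_smul] at h3
    rw [h3]
    module
  have hy'x : (w - (1/L) • (A w - b)) - xs = a - (1/L) • A a := by
    rw [hg, ha]; abel
  have hv'x : ((1-q) • v + q • w - (q/ℓ) • (A w - b)) - xs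
      = a - ((1-q)/q) • u - (q/ℓ) • A a := by
    rw [hg]
    have step1 : ((1-q) • v + q • w - (q/ℓ) • A a) - xs
        = (1-q) • (v - xs) + q • (w - xs) - (q/ℓ) • A a := by
      rw [smul_sub (1-q) v xs, smul_sub q w xs]
      have hone : (1-q) • xs + q • xs = xs := by rw [← add_smul]; norm_num
      rw [sub_add_sub_comm]
      rw [show (1-q) • xs + q • xs = xs from hone]
      abel
    rw [step1, hvx, ← ha]
    module
  rw [hy'x, hv'x, hyx]
  rw [expand1 A hsymm (1/L) a, expand2 A hsymm ((1-q)/q) (q/ℓ) a u,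
      expand3 A hsymm a u, hvx, expand4 (1/q) a u]
  have h1 := hhigh (A a)
  have h2 := hlow u
  have h3 := hlow a
  rw [← hq2] at h2 h3 ⊢
  exact scalarStep q L (‖a‖^2) (‖u‖^2) (⟪a,u⟫_ℝ) (⟪A a, a⟫_ℝ) (⟪A u, u⟫_ℝ)
    (⟪A a, u⟫_ℝ) (‖A a‖^2) (⟪A (A a), A a⟫_ℝ) hq0 hq1 hL (by positivity) h1 h2 h3

noncomputable def agd {E : Type*} [NormedAddCommGroup E] [InnerProductSpace ℝ E]
    (A : E →L[ℝ] E) (b x0 : E) (L q ℓ : ℝ) : ℕ → E × E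
  | 0 => (x0, x0)
  | (t+1) =>
      let yv := agd A b x0 L q ℓ t
      let w := (1/(1+q)) • (yv.1 + q • yv.2)
      (w - (1/L) • (A w - b), (1-q) • yv.2 + q • w - (q/ℓ) • (A w - b))

lemma agd_pot {E : Type*} [NormedAddCommGroup E] [InnerProductSpace ℝ E]
    (A : E →L[ℝ] E) (b xs x0 : E) (hxs : A xs = b)
    (hsymm : ∀ u v : E, ⟪A u, v⟫_ℝ = ⟪u, A v⟫_ℝ)
    (ℓ L : ℝ) (hℓ : 0 < ℓ) (hℓL : ℓ ≤ L)
    (hlow : ∀ u : E, ℓ * ‖u‖ ^ 2 ≤ ⟪A u, u⟫_ℝ)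
    (hhigh : ∀ u : E, ⟪A u, u⟫_ℝ ≤ L * ‖u‖ ^ 2)
    (q : ℝ) (hq0 : 0 < q) (hq1 : q ≤ 1) (hq2 : q^2 * L = ℓ) (t : ℕ) :
    ⟪(agd A b x0 L q ℓ (t+1)).1 - xs, A ((agd A b x0 L q ℓ (t+1)).1 - xs)⟫_ℝ/2
      + ℓ/2 * ‖(agd A b x0 L q ℓ (t+1)).2 - xs‖^2
    ≤ (1-q)^(t+1) * (⟪x0 - xs, A (x0 - xs)⟫_ℝ/2 + ℓ/2 * ‖x0 - xs‖^2) := by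
  induction t with
  | zero =>
      have h := vecStep A b xs hxs hsymm ℓ L hℓ hℓL hlow hhigh q hq0 hq1 hq2
        (agd A b x0 L q ℓ 0).1 (agd A b x0 L q ℓ 0).2
      simp only [agd] at h ⊢
      simpa using h
  | succ n ih =>
      have h := vecStep A b xs hxs hsymm ℓ L hℓ hℓL hlow hhigh q hq0 hq1 hq2
        (agd A b x0 L q ℓ (n+1)).1 (agd A b x0 L q ℓ (n+1)).2
      have hmul : (1-q) * (⟪(agd A b x0 L q ℓ (n+1)).1 - xs,
            A ((agd A b x0 L q ℓ (n+1)).1 - xs)⟫_ℝ/2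
            + ℓ/2 * ‖(agd A b x0 L q ℓ (n+1)).2 - xs‖^2)
          ≤ (1-q) * ((1-q)^(n+1) * (⟪x0 - xs, A (x0 - xs)⟫_ℝ/2 + ℓ/2 * ‖x0 - xs‖^2)) :=
        mul_le_mul_of_nonneg_left ih (by linarith)
      calc ⟪(agd A b x0 L q ℓ (n+2)).1 - xs, A ((agd A b x0 L q ℓ (n+2)).1 - xs)⟫_ℝ/2
            + ℓ/2 * ‖(agd A b x0 L q ℓ (n+2)).2 - xs‖^2
          ≤ (1-q) * (⟪(agd A b x0 L q ℓ (n+1)).1 - xs,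
              A ((agd A b x0 L q ℓ (n+1)).1 - xs)⟫_ℝ/2
              + ℓ/2 * ‖(agd A b x0 L q ℓ (n+1)).2 - xs‖^2) := by
            simp only [agd]
            exact h
        _ ≤ (1-q) * ((1-q)^(n+1) * (⟪x0 - xs, A (x0 - xs)⟫_ℝ/2 + ℓ/2 * ‖x0 - xs‖^2)) := hmul
        _ = (1-q)^(n+2) * (⟪x0 - xs, A (x0 - xs)⟫_ℝ/2 + ℓ/2 * ‖x0 - xs‖^2) := by ring

lemma agd_mem {E : Type*} [NormedAddCommGroup E] [InnerProductSpace ℝ E]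
    (A : E →L[ℝ] E) (b x0 : E) (L q ℓ : ℝ) (hq0 : 0 < q)
    (S : ℕ → Submodule ℝ E) (hmono : ∀ t, S t ≤ S (t+1))
    (N : ℕ) (hA : ∀ t, t+1 ≤ N → ∀ z : E, z - x0 ∈ S t → A z - b ∈ S (t+1)) :
    ∀ t ≤ N, (agd A b x0 L q ℓ t).1 - x0 ∈ S t ∧ (agd A b x0 L q ℓ t).2 - x0 ∈ S t := by
  have h1q : (1+q) ≠ 0 := by positivity
  intro t
  induction t with
  | zero => intro _; constructor <;> · simp [agd]
  | succ n ih =>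
      intro hn
      obtain ⟨hy, hv⟩ := ih (le_trans (Nat.le_succ n) hn)
      set y : E := (agd A b x0 L q ℓ n).1
      set v : E := (agd A b x0 L q ℓ n).2
      set w : E := (1/(1+q)) • (y + q • v) with hw
      have hwmem : w - x0 ∈ S n := by
        have ew : w - x0 = (1/(1+q)) • ((y - x0) + q • (v - x0)) := by
          rw [hw]
          have e0 : x0 = (1/(1+q)) • ((1+q) • x0) := by
            rw [smul_smul, one_div, inv_mul_cancel₀ h1q, one_smul]
          nth_rewrite 1 [e0]
          rw [← smul_sub]
          congr 1
          module
        rw [ew]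
        exact Submodule.smul_mem _ _ (Submodule.add_mem _ hy (Submodule.smul_mem _ _ hv))
      have hgmem : A w - b ∈ S (n+1) := hA n hn w hwmem
      constructor
      · show (w - (1/L) • (A w - b)) - x0 ∈ S (n+1)
        have : (w - (1/L) • (A w - b)) - x0 = (w - x0) - (1/L) • (A w - b) := by abel
        rw [this]
        exact Submodule.sub_mem _ (hmono n hwmem) (Submodule.smul_mem _ _ hgmem)
      · show ((1-q) • v + q • w - (q/ℓ) • (A w - b)) - x0 ∈ S (n+1)
        have e1 : ((1-q) • v + q • w - (q/ℓ) • (A w - b)) - x0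
            = (1-q) • (v - x0) + q • (w - x0) - (q/ℓ) • (A w - b) := by
          have e2 : (1-q) • x0 + q • x0 = x0 := by rw [← add_smul]; norm_num
          rw [smul_sub (1-q) v x0, smul_sub q w x0, sub_add_sub_comm, e2]
          abel
        rw [e1]
        exact Submodule.sub_mem _
          (Submodule.add_mem _ (Submodule.smul_mem _ _ (hmono n hv))
            (Submodule.smul_mem _ _ (hmono n hwmem)))
          (Submodule.smul_mem _ _ hgmem)

lemma cg_facts {E : Type*} [NormedAddCommGroup E] [InnerProductSpace ℝ E]
    (A : E →L[ℝ] E) (b : E)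
    (hsymm : ∀ u v : E, ⟪A u, v⟫_ℝ = ⟪u, A v⟫_ℝ)
    (hpos : ∀ u : E, u ≠ 0 → 0 < ⟪A u, u⟫_ℝ)
    (x p r : ℕ → E) (α β : ℕ → ℝ)
    (hr0 : r 0 = b - A (x 0))
    (hp1 : p 1 = r 0)
    (hβ : ∀ k ≥ 1, β (k + 1) = ‖r k‖ ^ 2 / ‖r (k - 1)‖ ^ 2)
    (hp : ∀ k ≥ 1, p (k + 1) = β (k + 1) • p k + r k)
    (hα : ∀ k, α (k + 1) = ‖r k‖ ^ 2 / ⟪A (p (k + 1)), p (k + 1)⟫_ℝ)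
    (hx : ∀ k, x (k + 1) = x k + α (k + 1) • p (k + 1))
    (hrr : ∀ k, r (k + 1) = r k - α (k + 1) • A (p (k + 1)))
    (N : ℕ) (hnz : ∀ j ≤ N, r j ≠ 0) :
    (∀ i j, i < j → j ≤ N → ⟪r i, r j⟫_ℝ = 0)
    ∧ (∀ i j, 1 ≤ i → i < j → j ≤ N → ⟪A (p i), p j⟫_ℝ = 0)
    ∧ (∀ i j, 1 ≤ i → i ≤ j → j ≤ N → ⟪r j, p i⟫_ℝ = 0) := by
  have conj_symm : ∀ u v : E, ⟪A u, v⟫_ℝ = ⟪A v, u⟫_ℝ := fun u v =>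
    (hsymm u v).trans (real_inner_comm _ _)
  suffices main : ∀ n, n ≤ N →
      (∀ i j, i < j → j ≤ n → ⟪r i, r j⟫_ℝ = 0)
      ∧ (∀ i j, 1 ≤ i → i < j → j ≤ n → ⟪A (p i), p j⟫_ℝ = 0)
      ∧ (∀ i j, 1 ≤ i → i ≤ j → j ≤ n → ⟪r j, p i⟫_ℝ = 0) by
    exact main N le_rfl
  intro n
  induction n with
  | zero =>
      intro _
      refine ⟨?_, ?_, ?_⟩ <;> (intro i j; omega)
  | succ n ih =>
      intro hn1
      obtain ⟨q1, q2, q3⟩ := ih (by omega)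
      -- helper facts
      have rp : ∀ j, j ≤ n → ⟪r j, p (j+1)⟫_ℝ = ‖r j‖^2 := by
        intro j hj
        cases j with
        | zero => rw [hp1]; exact real_inner_self_eq_norm_sq _
        | succ m =>
            rw [hp (m+1) (by omega), inner_add_right, real_inner_smul_right,
              q3 (m+1) (m+1) (by omega) le_rfl (by omega),
              real_inner_self_eq_norm_sq]
            ring
      have pne : ∀ j, j ≤ n → p (j+1) ≠ 0 := by
        intro j hj hcon
        have h1 := rp j hj
        rw [hcon, inner_zero_right] at h1
        have h2 : r j ≠ 0 := hnz j (by omega)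
        exact pow_ne_zero 2 (norm_ne_zero_iff.2 h2) h1.symm
      have Apos : ∀ j, j ≤ n → 0 < ⟪A (p (j+1)), p (j+1)⟫_ℝ := fun j hj =>
        hpos _ (pne j hj)
      have αval : ∀ j, j ≤ n → α (j+1) * ⟪A (p (j+1)), p (j+1)⟫_ℝ = ‖r j‖^2 := by
        intro j hj
        rw [hα j]
        exact div_mul_cancel₀ _ (ne_of_gt (Apos j hj))
      have αne : ∀ j, j ≤ n → α (j+1) ≠ 0 := by
        intro j hj
        rw [hα j]
        exact div_ne_zero (pow_ne_zero 2 (norm_ne_zero_iff.2 (hnz j (by omega))))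
          (ne_of_gt (Apos j hj))
      have hAp : ∀ j, j ≤ n → A (p (j+1)) = (α (j+1))⁻¹ • (r j - r (j+1)) := by
        intro j hj
        have h1 := hrr j
        have h2 : α (j+1) • A (p (j+1)) = r j - r (j+1) := by rw [h1]; abel
        rw [← h2, smul_smul, inv_mul_cancel₀ (αne j hj), one_smul]
      -- new conjugacy
      have q2new : ∀ i, 1 ≤ i → i < n+1 → ⟪A (p i), p (n+1)⟫_ℝ = 0 := by
        intro i hi1 hin
        obtain ⟨m, rfl⟩ : ∃ m, n = m + 1 := ⟨n-1, by omega⟩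
        rw [hp (m+1) (by omega), inner_add_right, real_inner_smul_right]
        rcases eq_or_lt_of_le (Nat.lt_succ_iff.mp hin) with heq | hlt
        · subst heq
          have hβv : β (m+2) = ‖r (m+1)‖^2 / ‖r m‖^2 := by
            exact hβ (m+1) (by omega)
          have hApv : ⟪A (p (m+1)), r (m+1)⟫_ℝ = (α (m+1))⁻¹ * (0 - ‖r (m+1)‖^2) := by
            rw [hAp m (by omega), real_inner_smul_left, inner_sub_left,
              q1 m (m+1) (by omega) le_rfl, real_inner_self_eq_norm_sq]
          have hα1 : α (m+1) ≠ 0 := αne m (by omega)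
          have hXv : ⟪A (p (m+1)), p (m+1)⟫_ℝ = ‖r m‖^2 / α (m+1) := by
            rw [eq_div_iff hα1]
            linear_combination αval m (by omega)
          rw [hApv, hXv, hβv]
          have hrm : ‖r m‖^2 ≠ 0 := pow_ne_zero 2 (norm_ne_zero_iff.2 (hnz m (by omega)))
          field_simp
          rw [mul_div_assoc, div_self (norm_ne_zero_iff.2 (hnz m (by omega)))]
          ring
        · -- i ≤ m
          rw [q2 i (m+1) hi1 hlt le_rfl]
          obtain ⟨j, rfl⟩ : ∃ j, i = j + 1 := ⟨i-1, by omega⟩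
          rw [hAp j (by omega), real_inner_smul_left, inner_sub_left,
            q1 j (m+1) (by omega) le_rfl, q1 (j+1) (m+1) (by omega) le_rfl]
          ring
      have q3new : ∀ i, 1 ≤ i → i ≤ n+1 → ⟪r (n+1), p i⟫_ℝ = 0 := by
        intro i hi1 hin
        rw [hrr n, inner_sub_left, real_inner_smul_left]
        rcases eq_or_lt_of_le hin with rfl | hlt
        · rw [rp n le_rfl]
          linarith [αval n le_rfl]
        · rw [q3 i n hi1 (by omega) le_rfl,
            show ⟪A (p (n+1)), p i⟫_ℝ = ⟪A (p i), p (n+1)⟫_ℝ from conj_symm _ _,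
            q2new i hi1 (by omega)]
          ring
      have q1new : ∀ i, i < n+1 → ⟪r i, r (n+1)⟫_ℝ = 0 := by
        intro i hi
        rw [hrr n, inner_sub_right, real_inner_smul_right,
          show ⟪r i, A (p (n+1))⟫_ℝ = ⟪A (p (n+1)), r i⟫_ℝ from real_inner_comm _ _]
        rcases eq_or_lt_of_le (Nat.lt_succ_iff.mp hi) with rfl | hilt
        · -- i = n
          cases i with
          | zero =>
              rw [show ⟪A (p 1), r 0⟫_ℝ = ⟪A (p 1), p 1⟫_ℝ by rw [hp1],
                real_inner_self_eq_norm_sq]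
              linarith [αval 0 le_rfl]
          | succ m =>
              have hr : r (m+1) = p (m+2) - β (m+2) • p (m+1) := by
                rw [hp (m+1) (by omega)]; abel
              have h2 : ⟪A (p (m+2)), r (m+1)⟫_ℝ
                  = ⟪A (p (m+2)), p (m+2)⟫_ℝ - β (m+2) * ⟪A (p (m+2)), p (m+1)⟫_ℝ := by
                calc ⟪A (p (m+2)), r (m+1)⟫_ℝ
                    = ⟪A (p (m+2)), p (m+2) - β (m+2) • p (m+1)⟫_ℝ := by rw [← hr]
                  _ = _ := by rw [inner_sub_right, real_inner_smul_right]
              rw [h2, show ⟪A (p (m+2)), p (m+1)⟫_ℝ = ⟪A (p (m+1)), p (m+2)⟫_ℝ from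
                  conj_symm _ _, q2new (m+1) (by omega) (by omega),
                real_inner_self_eq_norm_sq]
              have := αval (m+1) le_rfl
              ring_nf
              ring_nf at this
              linarith [this]
        · -- i < n
          rw [q1 i n hilt le_rfl]
          cases i with
          | zero =>
              rw [show ⟪A (p (n+1)), r 0⟫_ℝ = ⟪A (p (n+1)), p 1⟫_ℝ by rw [hp1],
                show ⟪A (p (n+1)), p 1⟫_ℝ = ⟪A (p 1), p (n+1)⟫_ℝ from conj_symm _ _,
                q2new 1 le_rfl (by omega)]
              ring
          | succ m =>
              have hr : r (m+1) = p (m+2) - β (m+2) • p (m+1) := by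
                rw [hp (m+1) (by omega)]; abel
              have h2 : ⟪A (p (n+1)), r (m+1)⟫_ℝ
                  = ⟪A (p (n+1)), p (m+2)⟫_ℝ - β (m+2) * ⟪A (p (n+1)), p (m+1)⟫_ℝ := by
                calc ⟪A (p (n+1)), r (m+1)⟫_ℝ
                    = ⟪A (p (n+1)), p (m+2) - β (m+2) • p (m+1)⟫_ℝ := by rw [← hr]
                  _ = _ := by rw [inner_sub_right, real_inner_smul_right]
              rw [h2,
                show ⟪A (p (n+1)), p (m+2)⟫_ℝ = ⟪A (p (m+2)), p (n+1)⟫_ℝ from conj_symm _ _,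
                show ⟪A (p (n+1)), p (m+1)⟫_ℝ = ⟪A (p (m+1)), p (n+1)⟫_ℝ from conj_symm _ _,
                q2new (m+2) (by omega) (by omega), q2new (m+1) (by omega) (by omega)]
              ring
      refine ⟨?_, ?_, ?_⟩
      · intro i j hij hj
        rcases eq_or_lt_of_le hj with rfl | hlt
        · exact q1new i hij
        · exact q1 i j hij (by omega)
      · intro i j hi1 hij hj
        rcases eq_or_lt_of_le hj with rfl | hlt
        · exact q2new i hi1 hij
        · exact q2 i j hi1 hij (by omega)
      · intro i j hi1 hij hj
        rcases eq_or_lt_of_le hj with rfl | hlt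
        · exact q3new i hi1 hij
        · exact q3 i j hi1 hij (by omega)

theorem stmt12
    {E : Type*} [NormedAddCommGroup E] [InnerProductSpace ℝ E]
    (A : E →L[ℝ] E) (b : E)
    (hsymm : ∀ u v : E, ⟪A u, v⟫_ℝ = ⟪u, A v⟫_ℝ)
    (hpos : ∀ u : E, u ≠ 0 → 0 < ⟪A u, u⟫_ℝ)
    (f : E → ℝ) (hf : ∀ z : E, f z = ⟪z, A z⟫_ℝ / 2 - ⟪b, z⟫_ℝ)
    (x p r : ℕ → E) (α β : ℕ → ℝ)
    (hr0 : r 0 = b - A (x 0))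
    (hp1 : p 1 = r 0)
    (hβ : ∀ k ≥ 1, β (k + 1) = ‖r k‖ ^ 2 / ‖r (k - 1)‖ ^ 2)
    (hp : ∀ k ≥ 1, p (k + 1) = β (k + 1) • p k + r k)
    (hα : ∀ k, α (k + 1) = ‖r k‖ ^ 2 / ⟪A (p (k + 1)), p (k + 1)⟫_ℝ)
    (hx : ∀ k, x (k + 1) = x k + α (k + 1) • p (k + 1))
    (hrr : ∀ k, r (k + 1) = r k - α (k + 1) • A (p (k + 1)))
    (xs : E) (hxs : A xs = b)
    (ℓ L : ℝ) (hℓ : 0 < ℓ) (hℓL : ℓ ≤ L)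
    (hlow : ∀ u : E, ℓ * ‖u‖ ^ 2 ≤ ⟪A u, u⟫_ℝ)
    (hhigh : ∀ u : E, ⟪A u, u⟫_ℝ ≤ L * ‖u‖ ^ 2)
    (C₀ : ℝ) (hC₀ : C₀ = ℓ / 2 * ‖x 0 - xs‖ ^ 2 + (f (x 0) - f xs)) :
    ∀ k ≥ 1, (∀ j ≤ k, r j ≠ 0) →
      f (x k) - f xs ≤ C₀ / (1 + Real.sqrt (ℓ / L)) ^ (k - 1) := by
  intro k hk hnz
  have hL0 : 0 < L := lt_of_lt_of_le hℓ hℓL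
  set q : ℝ := Real.sqrt (ℓ/L) with hqdef
  have hq0 : 0 < q := Real.sqrt_pos.2 (div_pos hℓ hL0)
  have hq1 : q ≤ 1 := by
    rw [hqdef, show (1:ℝ) = Real.sqrt 1 by simp]
    exact Real.sqrt_le_sqrt (by rw [div_le_one hL0]; exact hℓL)
  have hq2 : q^2 * L = ℓ := by
    rw [hqdef, Real.sq_sqrt (le_of_lt (div_pos hℓ hL0))]
    field_simp
  have conj_symm : ∀ u v : E, ⟪A u, v⟫_ℝ = ⟪A v, u⟫_ℝ := fun u v =>
    (hsymm u v).trans (real_inner_comm _ _)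
  have fdiff : ∀ z : E, f z - f xs = ⟪z - xs, A (z - xs)⟫_ℝ/2 := by
    intro z
    have h1 : ⟪xs, A z⟫_ℝ = ⟪b, z⟫_ℝ := by rw [← hxs]; exact (hsymm xs z).symm
    have h2 : ⟪z, b⟫_ℝ = ⟪b, z⟫_ℝ := real_inner_comm _ _
    have h3 : ⟪xs, b⟫_ℝ = ⟪b, xs⟫_ℝ := real_inner_comm _ _
    rw [hf z, hf xs, map_sub, hxs, inner_sub_left, inner_sub_right, inner_sub_right,
      h1, h2, h3]
    ring
  obtain ⟨q1, q2, q3⟩ := cg_facts A b hsymm hpos x p r α β hr0 hp1 hβ hp hα hx hrr k hnz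
  -- derived CG facts
  have rp : ∀ j, j < k → ⟪r j, p (j+1)⟫_ℝ = ‖r j‖^2 := by
    intro j hj
    cases j with
    | zero => rw [hp1]; exact real_inner_self_eq_norm_sq _
    | succ m =>
        rw [hp (m+1) (by omega), inner_add_right, real_inner_smul_right,
          q3 (m+1) (m+1) (by omega) le_rfl (by omega), real_inner_self_eq_norm_sq]
        ring
  have pne : ∀ j, j < k → p (j+1) ≠ 0 := by
    intro j hj hcon
    have h1 := rp j hj
    rw [hcon, inner_zero_right] at h1
    exact pow_ne_zero 2 (norm_ne_zero_iff.2 (hnz j (by omega))) h1.symm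
  have Apos : ∀ j, j < k → 0 < ⟪A (p (j+1)), p (j+1)⟫_ℝ := fun j hj => hpos _ (pne j hj)
  have αne : ∀ j, j < k → α (j+1) ≠ 0 := by
    intro j hj
    rw [hα j]
    exact div_ne_zero (pow_ne_zero 2 (norm_ne_zero_iff.2 (hnz j (by omega))))
      (ne_of_gt (Apos j hj))
  have hAp : ∀ j, j < k → A (p (j+1)) = (α (j+1))⁻¹ • (r j - r (j+1)) := by
    intro j hj
    have h2 : α (j+1) • A (p (j+1)) = r j - r (j+1) := by rw [hrr j]; abel
    rw [← h2, smul_smul, inv_mul_cancel₀ (αne j hj), one_smul]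
  -- spans
  set S : ℕ → Submodule ℝ E := fun m => Submodule.span ℝ (r '' Set.Iio m) with hS
  have Smono : ∀ s t, s ≤ t → S s ≤ S t := fun s t hst =>
    Submodule.span_mono (Set.image_mono (fun z hz => lt_of_lt_of_le hz hst))
  have rmem : ∀ j m, j < m → r j ∈ S m := fun j m hj => Submodule.subset_span ⟨j, hj, rfl⟩
  have pmem : ∀ j, j < k → p (j+1) ∈ S (j+1) := by
    intro j
    induction j with
    | zero => intro _; rw [hp1]; exact rmem 0 1 (by omega)
    | succ m ihm =>
        intro hm
        rw [hp (m+1) (by omega)]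
        exact Submodule.add_mem _
          (Submodule.smul_mem _ _ (Smono _ _ (by omega) (ihm (by omega))))
          (rmem (m+1) (m+2) (by omega))
  have xmem : ∀ j, j ≤ k → x j - x 0 ∈ S j := by
    intro j
    induction j with
    | zero => intro _; simp
    | succ m ihm =>
        intro hm
        rw [hx m, show x m + α (m+1) • p (m+1) - x 0 = (x m - x 0) + α (m+1) • p (m+1) by abel]
        exact Submodule.add_mem _ (Smono _ _ (by omega) (ihm (by omega)))
          (Submodule.smul_mem _ _ (pmem m (by omega)))
  have Armem : ∀ j, j + 1 < k → A (r j) ∈ S (j+2) := by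
    intro j hj
    cases j with
    | zero =>
        rw [← hp1, hAp 0 (by omega)]
        exact Submodule.smul_mem _ _
          (Submodule.sub_mem _ (rmem 0 2 (by omega)) (rmem 1 2 (by omega)))
    | succ m =>
        have hr : r (m+1) = p (m+2) - β (m+2) • p (m+1) := by
          rw [hp (m+1) (by omega)]; abel
        rw [show A (r (m+1)) = A (p (m+2)) - β (m+2) • A (p (m+1)) by
          rw [← map_smul, ← map_sub, ← hr]]
        rw [hAp (m+1) (by omega), hAp m (by omega)]
        exact Submodule.sub_mem _
          (Submodule.smul_mem _ _
            (Submodule.sub_mem _ (rmem (m+1) (m+3) (by omega)) (rmem (m+2) (m+3) (by omega))))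
          (Submodule.smul_mem _ _ (Submodule.smul_mem _ _
            (Submodule.sub_mem _ (rmem m (m+3) (by omega)) (rmem (m+1) (m+3) (by omega)))))
  have Amaps : ∀ t, t + 1 < k → ∀ z, z ∈ S t → A z ∈ S (t+1) := by
    intro t ht z hz
    induction hz using Submodule.span_induction with
    | mem w hw =>
        obtain ⟨j, hj, rfl⟩ := hw
        exact Smono _ _ (by exact Nat.succ_le_of_lt (by simpa using hj)) (Armem j (by
          simp only [Set.mem_Iio] at hj; omega))
    | zero => rw [map_zero]; exact Submodule.zero_mem _
    | add w₁ w₂ h₁ h₂ ih₁ ih₂ => rw [map_add]; exact Submodule.add_mem _ ih₁ ih₂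
    | smul c w h ih => rw [map_smul]; exact Submodule.smul_mem _ _ ih
  have rres : ∀ j, r j = b - A (x j) := by
    intro j
    induction j with
    | zero => exact hr0
    | succ m ihm =>
        rw [hrr m, ihm, hx m, map_add, map_smul]
        abel
  have rperp : ∀ z, z ∈ S k → ⟪r k, z⟫_ℝ = 0 := by
    intro z hz
    induction hz using Submodule.span_induction with
    | mem w hw =>
        obtain ⟨j, hj, rfl⟩ := hw
        simp only [Set.mem_Iio] at hj
        rw [real_inner_comm]
        exact q1 j k hj le_rfl
    | zero => exact inner_zero_right _
    | add w₁ w₂ h₁ h₂ ih₁ ih₂ => rw [inner_add_right, ih₁, ih₂]; norm_num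
    | smul c w h ih => rw [real_inner_smul_right, ih]; ring
  have opt : ∀ z : E, z - x 0 ∈ S k →
      ⟪x k - xs, A (x k - xs)⟫_ℝ/2 ≤ ⟪z - xs, A (z - xs)⟫_ℝ/2 := by
    intro z hz
    have hd : z - x k ∈ S k := by
      have h1 := Submodule.sub_mem _ hz (xmem k le_rfl)
      rw [show z - x 0 - (x k - x 0) = z - x k by abel] at h1
      exact h1
    rw [show z - xs = (x k - xs) + (z - x k) by abel,
      expand3 A hsymm (x k - xs) (z - x k)]
    have hperp : ⟪A (x k - xs), z - x k⟫_ℝ = 0 := by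
      rw [show A (x k - xs) = -(r k) by rw [map_sub, hxs, rres k]; abel,
        inner_neg_left, rperp _ hd, neg_zero]
    have hpsd : 0 ≤ ⟪A (z - x k), z - x k⟫_ℝ :=
      le_trans (by positivity) (hlow (z - x k))
    rw [show ⟪x k - xs, A (x k - xs)⟫_ℝ = ⟪A (x k - xs), x k - xs⟫_ℝ from
      real_inner_comm _ _]
    linarith
  -- AGD comparison sequence
  have hA' : ∀ t, t + 1 ≤ k - 1 → ∀ z : E, z - x 0 ∈ S t → A z - b ∈ S (t+1) := by
    intro t ht z hz
    rw [show A z - b = A (z - x 0) - r 0 by rw [map_sub, hr0]; abel]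
    exact Submodule.sub_mem _ (Amaps t (by omega) _ hz) (rmem 0 (t+1) (by omega))
  have hmem := agd_mem A b (x 0) L q ℓ hq0 S (fun t => Smono t (t+1) (by omega))
    (k-1) hA' (k-1) le_rfl
  set y : E := (agd A b (x 0) L q ℓ (k-1)).1 with hy
  set v : E := (agd A b (x 0) L q ℓ (k-1)).2 with hv
  have hopt := opt y (Smono (k-1) k (by omega) hmem.1)
  have hpot : ⟪y - xs, A (y - xs)⟫_ℝ/2 + ℓ/2 * ‖v - xs‖^2
      ≤ (1-q)^(k-1) * (⟪x 0 - xs, A (x 0 - xs)⟫_ℝ/2 + ℓ/2 * ‖x 0 - xs‖^2) := by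
    rcases Nat.eq_zero_or_pos (k-1) with h0 | hpos'
    · rw [hy, hv, h0]
      simp [agd]
    · obtain ⟨t, ht⟩ : ∃ t, k - 1 = t + 1 := ⟨k - 2, by omega⟩
      rw [hy, hv, ht]
      exact agd_pot A b xs (x 0) hxs hsymm ℓ L hℓ hℓL hlow hhigh q hq0 hq1 hq2 t
  have hC0 : ⟪x 0 - xs, A (x 0 - xs)⟫_ℝ/2 + ℓ/2 * ‖x 0 - xs‖^2 = C₀ := by
    rw [hC₀, ← fdiff (x 0)]
    ring
  have hC0nn : 0 ≤ C₀ := by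
    rw [← hC0]
    have h1 : 0 ≤ ⟪x 0 - xs, A (x 0 - xs)⟫_ℝ := by
      rw [real_inner_comm]
      exact le_trans (by positivity) (hlow (x 0 - xs))
    positivity
  have hfin : (1-q)^(k-1) * C₀ ≤ C₀ / (1+q)^(k-1) := by
    have h1 : (1-q) ≤ 1/(1+q) := by
      rw [le_div_iff₀ (by linarith)]
      nlinarith
    have h2 : (1-q)^(k-1) ≤ (1/(1+q))^(k-1) := pow_le_pow_left₀ (by linarith) h1 _
    calc (1-q)^(k-1) * C₀ ≤ (1/(1+q))^(k-1) * C₀ := mul_le_mul_of_nonneg_right h2 hC0nn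
      _ = C₀ / (1+q)^(k-1) := by rw [div_pow, one_pow]; ring
  have hnnv : 0 ≤ ℓ/2 * ‖v - xs‖^2 := by positivity
  calc f (x k) - f xs = ⟪x k - xs, A (x k - xs)⟫_ℝ/2 := fdiff (x k)
    _ ≤ ⟪y - xs, A (y - xs)⟫_ℝ/2 := hopt
    _ ≤ ⟪y - xs, A (y - xs)⟫_ℝ/2 + ℓ/2 * ‖v - xs‖^2 := by linarith
    _ ≤ (1-q)^(k-1) * (⟪x 0 - xs, A (x 0 - xs)⟫_ℝ/2 + ℓ/2 * ‖x 0 - xs‖^2) := hpot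
    _ = (1-q)^(k-1) * C₀ := by rw [hC0]
    _ ≤ C₀ / (1+q)^(k-1) := hfin
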